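/- If k ≥ 3 and an [n,k,d]_q A^sMDS code has minimum distance d > α(q²+q) − q for some integer α ≥ 0, then n ≤ (s+1−α)(q+1) + k − 2 + α. In particular, if d > q² then n ≤ s(q+1) + k − 1. -/

import Mathlib

/-- The number of points (with multiplicity) of the projective system `G`
lying on the hyperplane `ker φ`. -/
noncomputable def hypCount {F : Type*} [Field F] [DecidableEq F] {n k : ℕ}
    (G : Fin n → Fin k → F) (φ : (Fin k → F) →ₗ[F] F) : ℕ :=
  (Finset.univ.filter fun i => φ (G i) = 0).card

/-- `G` is (the projective system of) a non-degenerate linear `[n,k,d]_q` code: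
an `n`-multiset of nonzero points spanning `PG(k-1,q)`, every hyperplane containing
at most `n - d` points, and some hyperplane (a secant) containing exactly `n - d`. -/
def IsCodePS (F : Type*) [Field F] [DecidableEq F] (n k d : ℕ)
    (G : Fin n → Fin k → F) : Prop :=
  0 < d ∧ (∀ i, G i ≠ 0) ∧ Submodule.span F (Set.range G) = ⊤ ∧
  (∀ φ : (Fin k → F) →ₗ[F] F, φ ≠ 0 → hypCount G φ + d ≤ n) ∧
  (∃ φ : (Fin k → F) →ₗ[F] F, φ ≠ 0 ∧ hypCount G φ + d = n)

open Finset Module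

private lemma point_aux {F : Type*} [Field F] [Fintype F] [DecidableEq F] (a b : F) :
    (∑ t : F, if b + t * a = 0 then 1 else 0) + (if a = 0 then 1 else 0)
      = 1 + Fintype.card F * (if a = 0 ∧ b = 0 then 1 else 0) := by
  by_cases ha : a = 0
  · by_cases hb : b = 0 <;> simp [ha, hb] <;> omega
  · have h : ∀ t : F, (b + t * a = 0) ↔ t = -b / a := by
      intro t
      constructor
      · intro ht; field_simp; linear_combination ht
      · intro ht; subst ht; field_simp; ring
    simp only [h, ha, if_false, false_and, mul_zero, add_zero]
    rw [Finset.sum_ite_eq' Finset.univ (-b / a) (fun _ => (1 : ℕ))]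
    simp

private lemma pencil_aux {F : Type*} [Field F] [Fintype F] [DecidableEq F] {n k : ℕ}
    (G : Fin n → Fin k → F) (S : Finset (Fin n)) (φ ψ : (Fin k → F) →ₗ[F] F) :
    (∑ t : F, (S.filter fun i => (ψ + t • φ) (G i) = 0).card)
      + (S.filter fun i => φ (G i) = 0).card
    = S.card + Fintype.card F * (S.filter fun i => φ (G i) = 0 ∧ ψ (G i) = 0).card := by
  simp only [Finset.card_filter, LinearMap.add_apply, LinearMap.smul_apply, smul_eq_mul]
  rw [Finset.sum_comm, ← Finset.sum_add_distrib]
  have hS : S.card = ∑ _i ∈ S, 1 := by simp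
  rw [hS, Finset.mul_sum, ← Finset.sum_add_distrib]
  refine Finset.sum_congr rfl fun i _ => ?_
  exact point_aux (φ (G i)) (ψ (G i))

/-- Existence of a functional outside `Q` vanishing on the points indexed by `T`. -/
private lemma exists_ann {F : Type*} [Field F] [Fintype F] [DecidableEq F] {n k : ℕ}
    (G : Fin n → Fin k → F) (T : Finset (Fin n))
    (Q : Submodule F ((Fin k → F) →ₗ[F] F)) (hQ : finrank F Q + T.card < k) :
    ∃ ψ : (Fin k → F) →ₗ[F] F, ψ ∉ Q ∧ ∀ i ∈ T, ψ (G i) = 0 := by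
  classical
  set U : Submodule F (Fin k → F) := Submodule.span F ↑(T.image G) with hU
  have hUrank : finrank F U ≤ T.card :=
    le_trans (finrank_span_finset_le_card _) Finset.card_image_le
  have hannrank : finrank F U + finrank F U.dualAnnihilator = k := by
    have h1 : finrank F U.dualAnnihilator = finrank F ((Fin k → F) ⧸ U) :=
      (LinearEquiv.finrank_eq (Subspace.quotEquivAnnihilator U)).symm
    have h2 := Submodule.finrank_quotient_add_finrank U
    have h3 : finrank F (Fin k → F) = k := Module.finrank_fin_fun F
    omega
  have hnle : ¬ (U.dualAnnihilator ≤ Q) := by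
    intro hle
    have h4 : finrank F U.dualAnnihilator ≤ finrank F Q := Submodule.finrank_mono hle
    omega
  obtain ⟨ψ, hψann, hψQ⟩ := SetLike.not_le_iff_exists.mp hnle
  refine ⟨ψ, hψQ, fun i hi => ?_⟩
  exact (Submodule.mem_dualAnnihilator ψ).mp hψann _
    (Submodule.subset_span (Finset.mem_coe.mpr (Finset.mem_image_of_mem G hi)))

private lemma main_facts {F : Type*} [Field F] [Fintype F] [DecidableEq F]
    {n k d s : ℕ} {G : Fin n → Fin k → F}
    (hk : 3 ≤ k) (hG : IsCodePS F n k d G) (hs : d + k + s = n + 1) :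
    ∃ d₁ d₂ : ℕ, d ≤ Fintype.card F * d₁ ∧ d₁ ≤ Fintype.card F * d₂ ∧ d₁ + d₂ ≤ s + 2 := by
  classical
  obtain ⟨hd, _hGnz, _hspan, hmax, φ₁, hφ₁ne, hsec⟩ := hG
  set q := Fintype.card F with hqdef
  have hq : 1 ≤ q := Fintype.card_pos
  set S₁ : Finset (Fin n) := Finset.univ.filter (fun i => φ₁ (G i) = 0) with hS₁
  have hcard : S₁.card + d = n := hsec
  -- level 1 Singleton: a functional ψ₀ outside span{φ₁} vanishing on k-2 of the points of S₁
  obtain ⟨T, hTS, hTcard⟩ := Finset.exists_subset_card_eq (s := S₁) (n := k - 2) (by omega)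
  have hQ1 : finrank F (Submodule.span F {φ₁}) + T.card < k := by
    have h1 : finrank F (Submodule.span F {φ₁}) = 1 := finrank_span_singleton hφ₁ne
    omega
  obtain ⟨ψ₀, hψ₀Q, hψ₀T⟩ := exists_ann G T _ hQ1
  have hψ₀cnt : k - 2 ≤ (S₁.filter fun i => ψ₀ (G i) = 0).card := by
    rw [← hTcard]
    apply Finset.card_le_card
    intro i hi
    exact Finset.mem_filter.mpr ⟨hTS hi, hψ₀T i hi⟩
  -- maximize the count over functionals outside span{φ₁}
  let e := (Pi.basisFun F (Fin k)).toDualEquiv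
  obtain ⟨w₁, hw₁A, hw₁max⟩ := Finset.exists_max_image
    (Finset.univ.filter fun w => (e w : (Fin k → F) →ₗ[F] F) ∉ Submodule.span F {φ₁})
    (fun w => (S₁.filter fun i => (e w) (G i) = 0).card)
    ⟨e.symm ψ₀, Finset.mem_filter.mpr ⟨Finset.mem_univ _, by
      rw [LinearEquiv.apply_symm_apply]; exact hψ₀Q⟩⟩
  set ψ₁ : (Fin k → F) →ₗ[F] F := e w₁ with hψ₁def
  have hψ₁Q : ψ₁ ∉ Submodule.span F {φ₁} := (Finset.mem_filter.mp hw₁A).2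
  set m₁ := (S₁.filter fun i => ψ₁ (G i) = 0).card with hm₁
  have hmax₁ : ∀ ψ : (Fin k → F) →ₗ[F] F, ψ ∉ Submodule.span F {φ₁} →
      (S₁.filter fun i => ψ (G i) = 0).card ≤ m₁ := by
    intro ψ hψ
    have hmem : e.symm ψ ∈ Finset.univ.filter
        fun w => (e w : (Fin k → F) →ₗ[F] F) ∉ Submodule.span F {φ₁} :=
      Finset.mem_filter.mpr ⟨Finset.mem_univ _, by rw [LinearEquiv.apply_symm_apply]; exact hψ⟩
    have := hw₁max _ hmem
    rwa [LinearEquiv.apply_symm_apply] at this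
  have hm₁k : k - 2 ≤ m₁ := le_trans hψ₀cnt (hmax₁ ψ₀ hψ₀Q)
  have hm₁c : m₁ ≤ S₁.card := Finset.card_filter_le _ _
  -- level 1 pencil inequality : R1
  have hpencil1 := pencil_aux G Finset.univ φ₁ ψ₁
  rw [← hS₁, Finset.card_univ, Fintype.card_fin] at hpencil1
  have hfold1 : (Finset.univ.filter fun i => φ₁ (G i) = 0 ∧ ψ₁ (G i) = 0)
      = S₁.filter fun i => ψ₁ (G i) = 0 := by
    rw [hS₁, Finset.filter_filter]
  rw [hfold1, ← hm₁] at hpencil1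
  have hterm : ∀ t : F, (Finset.univ.filter fun i => (ψ₁ + t • φ₁) (G i) = 0).card ≤ S₁.card := by
    intro t
    have hne : ψ₁ + t • φ₁ ≠ 0 := by
      intro h0
      apply hψ₁Q
      rw [Submodule.mem_span_singleton]
      exact ⟨-t, by rw [neg_smul, ← eq_neg_of_add_eq_zero_left h0]⟩
    have hh : (Finset.univ.filter fun i => (ψ₁ + t • φ₁) (G i) = 0).card + d ≤ n := hmax _ hne
    omega
  have hsum1 : (∑ t : F, (Finset.univ.filter fun i => (ψ₁ + t • φ₁) (G i) = 0).card)
      ≤ q * S₁.card := by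
    calc (∑ t : F, (Finset.univ.filter fun i => (ψ₁ + t • φ₁) (G i) = 0).card)
        ≤ ∑ _t : F, S₁.card := Finset.sum_le_sum fun t _ => hterm t
      _ = q * S₁.card := by rw [Finset.sum_const, Finset.card_univ, smul_eq_mul]
  have R1 : n + q * m₁ ≤ q * S₁.card + S₁.card := by
    rw [← hpencil1]
    exact Nat.add_le_add_right hsum1 _
  -- level 2 Singleton
  set S₂ : Finset (Fin n) := S₁.filter (fun i => ψ₁ (G i) = 0) with hS₂
  have hS₂card : S₂.card = m₁ := rfl
  obtain ⟨T', hT'S, hT'card⟩ := Finset.exists_subset_card_eq (s := S₂) (n := k - 3) (by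
    calc k - 3 ≤ k - 2 := by omega
      _ ≤ m₁ := hm₁k
      _ = S₂.card := hS₂card.symm)
  have hQ2 : finrank F (Submodule.span F {φ₁, ψ₁}) + T'.card < k := by
    have hco : ({φ₁, ψ₁} : Set ((Fin k → F) →ₗ[F] F))
        = (({φ₁, ψ₁} : Finset ((Fin k → F) →ₗ[F] F)) : Set _) := by simp
    have h2 : finrank F (Submodule.span F ({φ₁, ψ₁} : Set ((Fin k → F) →ₗ[F] F))) ≤ 2 := by
      rw [hco]
      refine le_trans (finrank_span_finset_le_card _) ?_
      refine le_trans (Finset.card_insert_le _ _) ?_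
      simp
    omega
  obtain ⟨χ₀, hχ₀Q, hχ₀T⟩ := exists_ann G T' _ hQ2
  have hχ₀cnt : k - 3 ≤ (S₂.filter fun i => χ₀ (G i) = 0).card := by
    rw [← hT'card]
    apply Finset.card_le_card
    intro i hi
    exact Finset.mem_filter.mpr ⟨hT'S hi, hχ₀T i hi⟩
  -- maximize over functionals outside span{φ₁, ψ₁}
  obtain ⟨w₂, hw₂B, hw₂max⟩ := Finset.exists_max_image
    (Finset.univ.filter fun w => (e w : (Fin k → F) →ₗ[F] F) ∉ Submodule.span F {φ₁, ψ₁})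
    (fun w => (S₂.filter fun i => (e w) (G i) = 0).card)
    ⟨e.symm χ₀, Finset.mem_filter.mpr ⟨Finset.mem_univ _, by
      rw [LinearEquiv.apply_symm_apply]; exact hχ₀Q⟩⟩
  set χ₁ : (Fin k → F) →ₗ[F] F := e w₂ with hχ₁def
  have hχ₁Q : χ₁ ∉ Submodule.span F {φ₁, ψ₁} := (Finset.mem_filter.mp hw₂B).2
  set m₂ := (S₂.filter fun i => χ₁ (G i) = 0).card with hm₂
  have hmax₂ : ∀ χ : (Fin k → F) →ₗ[F] F, χ ∉ Submodule.span F {φ₁, ψ₁} →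
      (S₂.filter fun i => χ (G i) = 0).card ≤ m₂ := by
    intro χ hχ
    have hmem : e.symm χ ∈ Finset.univ.filter
        fun w => (e w : (Fin k → F) →ₗ[F] F) ∉ Submodule.span F {φ₁, ψ₁} :=
      Finset.mem_filter.mpr ⟨Finset.mem_univ _, by rw [LinearEquiv.apply_symm_apply]; exact hχ⟩
    have := hw₂max _ hmem
    rwa [LinearEquiv.apply_symm_apply] at this
  have hm₂k : k - 3 ≤ m₂ := le_trans hχ₀cnt (hmax₂ χ₀ hχ₀Q)
  have hm₂m₁ : m₂ ≤ m₁ := by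
    rw [← hS₂card]
    exact Finset.card_filter_le _ _
  -- level 2 pencil inequality : R2
  have hpencil2 := pencil_aux G S₁ ψ₁ χ₁
  have hfold2 : (S₁.filter fun i => ψ₁ (G i) = 0 ∧ χ₁ (G i) = 0)
      = S₂.filter fun i => χ₁ (G i) = 0 := by
    rw [hS₂]
    conv_rhs => rw [Finset.filter_filter]
  rw [hfold2, ← hm₂, ← hm₁] at hpencil2
  have hterm2 : ∀ t : F, (S₁.filter fun i => (χ₁ + t • ψ₁) (G i) = 0).card ≤ m₁ := by
    intro t
    apply hmax₁
    intro hmem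
    apply hχ₁Q
    rw [Submodule.mem_span_singleton] at hmem
    obtain ⟨a, ha⟩ := hmem
    rw [Submodule.mem_span_pair]
    exact ⟨a, -t, by rw [neg_smul, ha]; abel⟩
  have hsum2 : (∑ t : F, (S₁.filter fun i => (χ₁ + t • ψ₁) (G i) = 0).card) ≤ q * m₁ := by
    calc (∑ t : F, (S₁.filter fun i => (χ₁ + t • ψ₁) (G i) = 0).card)
        ≤ ∑ _t : F, m₁ := Finset.sum_le_sum fun t _ => hterm2 t
      _ = q * m₁ := by rw [Finset.sum_const, Finset.card_univ, smul_eq_mul]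
  have R2 : S₁.card + q * m₂ ≤ q * m₁ + m₁ := by
    rw [← hpencil2]
    exact Nat.add_le_add_right hsum2 _
  -- assemble
  clear_value m₁ m₂
  refine ⟨S₁.card - m₁, m₁ - m₂, ?_, ?_, by omega⟩
  · obtain ⟨X, hX⟩ : ∃ X, q * m₁ = X := ⟨_, rfl⟩
    obtain ⟨Y, hY⟩ : ∃ Y, q * (S₁.card - m₁) = Y := ⟨_, rfl⟩
    obtain ⟨Z, hZ⟩ : ∃ Z, q * S₁.card = Z := ⟨_, rfl⟩
    have e1 : Z = X + Y := by
      rw [← hX, ← hY, ← hZ, ← Nat.left_distrib, Nat.add_sub_cancel' hm₁c]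
    rw [hX, hZ] at R1
    rw [hY]
    omega
  · obtain ⟨X, hX⟩ : ∃ X, q * m₂ = X := ⟨_, rfl⟩
    obtain ⟨Y, hY⟩ : ∃ Y, q * (m₁ - m₂) = Y := ⟨_, rfl⟩
    obtain ⟨Z, hZ⟩ : ∃ Z, q * m₁ = Z := ⟨_, rfl⟩
    have e1 : Z = X + Y := by
      rw [← hX, ← hY, ← hZ, ← Nat.left_distrib, Nat.add_sub_cancel' hm₂m₁]
    rw [hX, hZ] at R2
    rw [hY]
    omega

/-- If `k ≥ 3` and an `[n,k,d]_q` A^sMDS code has minimum distance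
`d > α(q²+q) - q` for an integer `α ≥ 0`, then `n ≤ (s+1-α)(q+1) + k - 2 + α`.
In particular, if `d > q²` then `n ≤ s(q+1) + k - 1`. -/
theorem big_distance_short_code (F : Type*) [Field F] [Fintype F] [DecidableEq F]
    (n k d s : ℕ) (G : Fin n → Fin k → F)
    (hk : 3 ≤ k) (hG : IsCodePS F n k d G) (hs : d + k + s = n + 1) :
    (∀ α : ℕ, α * (Fintype.card F ^ 2 + Fintype.card F) < d + Fintype.card F →
      n + 2 ≤ (s + 1 - α) * (Fintype.card F + 1) + k + α) ∧
    (Fintype.card F ^ 2 < d → n + 1 ≤ s * (Fintype.card F + 1) + k) := by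
  obtain ⟨d₁, d₂, h1, h2, h3⟩ := main_facts hk hG hs
  set q := Fintype.card F with hqdef
  have hq : 1 ≤ q := Fintype.card_pos
  have hd : 0 < d := hG.1
  have hd₁ : 1 ≤ d₁ := by
    rcases Nat.eq_zero_or_pos d₁ with h | h
    · subst h; simp at h1; omega
    · exact h
  have key : ∀ α : ℕ, α * (q ^ 2 + q) < d + q →
      n + 2 ≤ (s + 1 - α) * (q + 1) + k + α := by
    intro α hα
    have hd₂ : α + 1 ≤ d₂ := by
      rcases Nat.eq_zero_or_pos α with h0 | h0
      · subst h0
        rcases Nat.eq_zero_or_pos d₂ with h | h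
        · subst h; simp at h2; omega
        · omega
      · have hstep : α * (q + 1) ≤ d₁ := by
          have h1' : q * (α * (q + 1)) < q * (d₁ + 1) := by
            have e : q * (α * (q + 1)) = α * (q ^ 2 + q) := by ring
            have e2 : q * (d₁ + 1) = q * d₁ + q := by ring
            rw [e, e2]
            exact lt_of_lt_of_le hα (Nat.add_le_add_right h1 q)
          exact Nat.lt_succ_iff.mp (Nat.lt_of_mul_lt_mul_left h1')
        by_contra hcon
        push_neg at hcon
        have hle1 : α * (q + 1) ≤ q * α := by
          refine le_trans hstep (le_trans h2 ?_)
          exact Nat.mul_le_mul_left q (by omega)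
        have e : α * (q + 1) = q * α + α := by ring
        rw [e] at hle1
        have : α ≤ 0 := by
          have h' : q * α + α ≤ q * α + 0 := by simpa using hle1
          exact le_of_add_le_add_left h'
        omega
    have hts : d₁ ≤ s + 1 - α := by omega
    have hdt : d ≤ q * (s + 1 - α) := le_trans h1 (Nat.mul_le_mul_left q hts)
    have hα' : α ≤ s + 1 := by omega
    obtain ⟨P, hdP, hPt⟩ : ∃ P, d ≤ P ∧ (s + 1 - α) * (q + 1) = P + (s + 1 - α) :=
      ⟨q * (s + 1 - α), hdt, by ring⟩
    rw [hPt]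
    omega
  refine ⟨key, fun hd2 => ?_⟩
  have h := key 1 (by rw [one_mul]; exact Nat.add_lt_add_right hd2 q)
  have e1 : s + 1 - 1 = s := by omega
  rw [e1] at h
  obtain ⟨R, hR⟩ : ∃ R, R = s * (q + 1) := ⟨_, rfl⟩
  rw [← hR] at h ⊢
  omega
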